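/- Let ξ be a real random variable with E ξ = 0 and E ξ² ≤ 1, and let ξ̄ := ξ·1{ξ ≤ 1} and c > 0. Define the tilted variable ξ̂ by E f(ξ̂) = E f(ξ) e^{c ξ̄} / E e^{c ξ̄} for all bounded Borel f. Then E|ξ̂|^p ≤ e^{2c} E|ξ|^p for every p ≥ 1, and |E ξ̂| ≤ c e^{2c} E ξ². -/

import Mathlib

open MeasureTheory

lemma exp_sub_one_abs_le {x c : ℝ} (hc : 0 ≤ c) (hx : x ≤ c) :
    |Real.exp x - 1| ≤ |x| * Real.exp c := by
  rcases le_or_gt 0 x with h | h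
  · have h1 : (1 - x) * Real.exp x ≤ 1 := by
      have h2 : (1 - x) ≤ Real.exp (-x) := by
        have := Real.add_one_le_exp (-x); linarith
      calc (1 - x) * Real.exp x ≤ Real.exp (-x) * Real.exp x :=
            mul_le_mul_of_nonneg_right h2 (Real.exp_pos x).le
        _ = 1 := by rw [← Real.exp_add]; simp
    have h3 : Real.exp x - 1 ≤ x * Real.exp x := by nlinarith
    have h4 : Real.exp x ≤ Real.exp c := Real.exp_le_exp.2 hx
    rw [abs_of_nonneg (by have := Real.exp_pos x; nlinarith [Real.add_one_le_exp x] : (0:ℝ) ≤ Real.exp x - 1),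
      abs_of_nonneg h]
    nlinarith
  · have h1 : x + 1 ≤ Real.exp x := Real.add_one_le_exp x
    have h2 : Real.exp x ≤ 1 := by
      rw [← Real.exp_zero]; exact Real.exp_le_exp.2 h.le
    have h3 : (1:ℝ) ≤ Real.exp c := by
      rw [← Real.exp_zero]; exact Real.exp_le_exp.2 hc
    rw [abs_of_nonpos (by linarith), abs_of_neg h]
    nlinarith

/-- Cramér tilt: for `ξ` with `E ξ = 0`, `E ξ² ≤ 1`, `ξ̄ = ξ·1{ξ ≤ 1}` and `c > 0`,
the tilted variable `ξ̂` (whose expectations satisfy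
`E f(ξ̂) = E f(ξ) e^{c ξ̄} / E e^{c ξ̄}`) satisfies `E|ξ̂|^p ≤ e^{2c} E|ξ|^p` for `p ≥ 1`
and `|E ξ̂| ≤ c e^{2c} E ξ²`. -/
theorem stmt6 {Ω : Type*} [MeasurableSpace Ω] (μ : Measure Ω) [IsProbabilityMeasure μ]
    (ξ : Ω → ℝ) (hmeas : Measurable ξ) (hint : Integrable ξ μ)
    (hint2 : Integrable (fun ω => ξ ω ^ 2) μ)
    (hmean : ∫ ω, ξ ω ∂μ = 0) (hvar : ∫ ω, ξ ω ^ 2 ∂μ ≤ 1)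
    (c p : ℝ) (hc : 0 < c) (hp : 1 ≤ p)
    (hintp : Integrable (fun ω => |ξ ω| ^ p) μ) :
    ((∫ ω, |ξ ω| ^ p * Real.exp (c * (if ξ ω ≤ 1 then ξ ω else 0)) ∂μ)
        / (∫ ω, Real.exp (c * (if ξ ω ≤ 1 then ξ ω else 0)) ∂μ)
      ≤ Real.exp (2 * c) * ∫ ω, |ξ ω| ^ p ∂μ) ∧
    |(∫ ω, ξ ω * Real.exp (c * (if ξ ω ≤ 1 then ξ ω else 0)) ∂μ)
        / (∫ ω, Real.exp (c * (if ξ ω ≤ 1 then ξ ω else 0)) ∂μ)|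
      ≤ c * Real.exp (2 * c) * ∫ ω, ξ ω ^ 2 ∂μ := by
  have hbmeas : Measurable fun ω => if ξ ω ≤ 1 then ξ ω else 0 :=
    Measurable.ite (measurableSet_le hmeas measurable_const) hmeas measurable_const
  have hgmeas : Measurable fun ω => Real.exp (c * if ξ ω ≤ 1 then ξ ω else 0) :=
    Real.measurable_exp.comp (measurable_const.mul hbmeas)
  have hb_le : ∀ ω, (if ξ ω ≤ 1 then ξ ω else 0) ≤ 1 := by
    intro ω; split
    · assumption
    · norm_num
  have hg_le : ∀ ω, Real.exp (c * if ξ ω ≤ 1 then ξ ω else 0) ≤ Real.exp c := fun ω =>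
    Real.exp_le_exp.2 (by nlinarith [hb_le ω])
  have hg_int : Integrable (fun ω => Real.exp (c * if ξ ω ≤ 1 then ξ ω else 0)) μ := by
    apply Integrable.mono' (integrable_const (Real.exp c)) hgmeas.aestronglyMeasurable
    exact ae_of_all _ fun ω => by
      rw [Real.norm_eq_abs, abs_of_pos (Real.exp_pos _)]; exact hg_le ω
  have hb_int : Integrable (fun ω => if ξ ω ≤ 1 then ξ ω else 0) μ := by
    apply hint.mono hbmeas.aestronglyMeasurable
    exact ae_of_all _ fun ω => by
      simp only [Real.norm_eq_abs]
      split
      · exact le_rfl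
      · simp [abs_nonneg]
  have hb_int_ge : -1 ≤ ∫ ω, (if ξ ω ≤ 1 then ξ ω else 0) ∂μ := by
    have hsub : Integrable (fun ω => ξ ω - ξ ω ^ 2) μ := hint.sub hint2
    have h1 : ∫ ω, (ξ ω - ξ ω ^ 2) ∂μ ≤ ∫ ω, (if ξ ω ≤ 1 then ξ ω else 0) ∂μ := by
      apply integral_mono hsub hb_int
      intro ω; dsimp only; split
      · nlinarith [sq_nonneg (ξ ω)]
      · rename_i h; push_neg at h; nlinarith
    rw [integral_sub hint hint2, hmean] at h1
    linarith
  have hEpos' := Real.exp_pos (-c)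
  have hE : Real.exp (-c) ≤ ∫ ω, Real.exp (c * if ξ ω ≤ 1 then ξ ω else 0) ∂μ := by
    have h2 : ∀ ω, Real.exp (-c) * (1 + c + c * (if ξ ω ≤ 1 then ξ ω else 0)) ≤
        Real.exp (c * if ξ ω ≤ 1 then ξ ω else 0) := by
      intro ω
      have h3 := Real.add_one_le_exp (c * (if ξ ω ≤ 1 then ξ ω else 0) + c)
      have h4 : Real.exp (c * (if ξ ω ≤ 1 then ξ ω else 0) + c) * Real.exp (-c) =
          Real.exp (c * (if ξ ω ≤ 1 then ξ ω else 0)) := by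
        rw [← Real.exp_add]; ring_nf
      nlinarith
    calc Real.exp (-c) = Real.exp (-c) * (1 + c + c * (-1)) := by ring
      _ ≤ Real.exp (-c) * (1 + c + c * ∫ ω, (if ξ ω ≤ 1 then ξ ω else 0) ∂μ) := by
          have h5 := mul_le_mul_of_nonneg_left hb_int_ge hc.le
          have h6 : (1 + c + c * (-1)) ≤ 1 + c + c * ∫ ω, (if ξ ω ≤ 1 then ξ ω else 0) ∂μ := by
            linarith
          exact mul_le_mul_of_nonneg_left h6 hEpos'.le
      _ = ∫ ω, Real.exp (-c) * (1 + c + c * (if ξ ω ≤ 1 then ξ ω else 0)) ∂μ := by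
          rw [integral_const_mul, integral_add (integrable_const _) (hb_int.const_mul c),
            integral_const_mul, integral_const]
          simp
      _ ≤ ∫ ω, Real.exp (c * if ξ ω ≤ 1 then ξ ω else 0) ∂μ := by
          apply integral_mono _ hg_int h2
          exact (((integrable_const _).add (hb_int.const_mul c)).const_mul _)
  have hEpos : 0 < ∫ ω, Real.exp (c * if ξ ω ≤ 1 then ξ ω else 0) ∂μ :=
    lt_of_lt_of_le hEpos' hE
  have hprod : Real.exp (2 * c) * Real.exp (-c) = Real.exp c := by
    rw [← Real.exp_add]; ring_nf
  constructor
  · -- first part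
    have hpmeas : Measurable fun ω => |ξ ω| ^ p := hmeas.abs.pow_const p
    have hnum_int : Integrable
        (fun ω => |ξ ω| ^ p * Real.exp (c * if ξ ω ≤ 1 then ξ ω else 0)) μ := by
      apply Integrable.mono' (hintp.const_mul (Real.exp c))
        (hpmeas.mul hgmeas).aestronglyMeasurable
      exact ae_of_all _ fun ω => by
        have h0 : (0:ℝ) ≤ |ξ ω| ^ p := by positivity
        rw [Real.norm_eq_abs, Pi.mul_apply, abs_mul, abs_of_nonneg h0,
          abs_of_pos (Real.exp_pos _)]
        have := hg_le ω
        nlinarith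
    have hnum_le : (∫ ω, |ξ ω| ^ p * Real.exp (c * if ξ ω ≤ 1 then ξ ω else 0) ∂μ)
        ≤ Real.exp c * ∫ ω, |ξ ω| ^ p ∂μ := by
      rw [← integral_const_mul]
      apply integral_mono hnum_int (hintp.const_mul _)
      intro ω
      have h0 : (0:ℝ) ≤ |ξ ω| ^ p := by positivity
      have := hg_le ω
      dsimp only
      nlinarith
    have hnum_nonneg : 0 ≤ ∫ ω, |ξ ω| ^ p * Real.exp (c * if ξ ω ≤ 1 then ξ ω else 0) ∂μ :=
      integral_nonneg fun ω => mul_nonneg (by positivity) (Real.exp_pos _).le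
    have hI_nonneg : 0 ≤ ∫ ω, |ξ ω| ^ p ∂μ :=
      integral_nonneg fun ω => by positivity
    rw [div_le_iff₀ hEpos]
    calc (∫ ω, |ξ ω| ^ p * Real.exp (c * if ξ ω ≤ 1 then ξ ω else 0) ∂μ)
        ≤ Real.exp c * ∫ ω, |ξ ω| ^ p ∂μ := hnum_le
      _ = Real.exp (2 * c) * (∫ ω, |ξ ω| ^ p ∂μ) * Real.exp (-c) := by
          rw [← hprod]; ring
      _ ≤ Real.exp (2 * c) * (∫ ω, |ξ ω| ^ p ∂μ)
            * ∫ ω, Real.exp (c * if ξ ω ≤ 1 then ξ ω else 0) ∂μ :=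
          mul_le_mul_of_nonneg_left hE
            (mul_nonneg (Real.exp_pos _).le hI_nonneg)
  · -- second part
    have hgξ_int : Integrable (fun ω => ξ ω * Real.exp (c * if ξ ω ≤ 1 then ξ ω else 0)) μ := by
      apply Integrable.mono' (hint.norm.const_mul (Real.exp c))
        (hmeas.mul hgmeas).aestronglyMeasurable
      exact ae_of_all _ fun ω => by
        rw [Real.norm_eq_abs, Pi.mul_apply, abs_mul, abs_of_pos (Real.exp_pos _), Real.norm_eq_abs]
        have := hg_le ω
        have := abs_nonneg (ξ ω)
        nlinarith
    have key : ∀ ω, |ξ ω * (Real.exp (c * if ξ ω ≤ 1 then ξ ω else 0) - 1)|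
        ≤ c * Real.exp c * ξ ω ^ 2 := by
      intro ω
      by_cases h : ξ ω ≤ 1
      · simp only [if_pos h]
        have habs : |Real.exp (c * ξ ω) - 1| ≤ |c * ξ ω| * Real.exp c :=
          exp_sub_one_abs_le hc.le (by nlinarith)
        rw [abs_mul]
        calc |ξ ω| * |Real.exp (c * ξ ω) - 1| ≤ |ξ ω| * (|c * ξ ω| * Real.exp c) :=
              mul_le_mul_of_nonneg_left habs (abs_nonneg _)
          _ = c * Real.exp c * ξ ω ^ 2 := by
              have hsq : |ξ ω| * |ξ ω| = ξ ω ^ 2 := by rw [← abs_mul, ← sq, abs_sq]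
              rw [abs_mul, abs_of_pos hc, ← hsq]; ring
      · simp only [if_neg h, mul_zero, Real.exp_zero, sub_self, abs_zero]
        positivity
    have heq : (∫ ω, ξ ω * (Real.exp (c * if ξ ω ≤ 1 then ξ ω else 0) - 1) ∂μ)
        = ∫ ω, ξ ω * Real.exp (c * if ξ ω ≤ 1 then ξ ω else 0) ∂μ := by
      have hfun : (fun ω => ξ ω * (Real.exp (c * if ξ ω ≤ 1 then ξ ω else 0) - 1))
          = fun ω => ξ ω * Real.exp (c * if ξ ω ≤ 1 then ξ ω else 0) - ξ ω := by
        funext ω; ring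
      rw [hfun, integral_sub hgξ_int hint, hmean, sub_zero]
    have hmain : |∫ ω, ξ ω * Real.exp (c * if ξ ω ≤ 1 then ξ ω else 0) ∂μ|
        ≤ c * Real.exp c * ∫ ω, ξ ω ^ 2 ∂μ := by
      rw [← heq]
      have habs_int : Integrable
          (fun ω => |ξ ω * (Real.exp (c * if ξ ω ≤ 1 then ξ ω else 0) - 1)|) μ := by
        have hdiff : Integrable
            (fun ω => ξ ω * Real.exp (c * if ξ ω ≤ 1 then ξ ω else 0) - ξ ω) μ :=
          hgξ_int.sub hint
        have : (fun ω => |ξ ω * (Real.exp (c * if ξ ω ≤ 1 then ξ ω else 0) - 1)|)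
            = fun ω => |ξ ω * Real.exp (c * if ξ ω ≤ 1 then ξ ω else 0) - ξ ω| := by
          funext ω; ring_nf
        rw [this]; exact hdiff.abs
      calc |∫ ω, ξ ω * (Real.exp (c * if ξ ω ≤ 1 then ξ ω else 0) - 1) ∂μ|
          ≤ ∫ ω, |ξ ω * (Real.exp (c * if ξ ω ≤ 1 then ξ ω else 0) - 1)| ∂μ := by
            have := norm_integral_le_integral_norm
              (fun ω => ξ ω * (Real.exp (c * if ξ ω ≤ 1 then ξ ω else 0) - 1)) (μ := μ)
            simp only [Real.norm_eq_abs] at this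
            exact this
        _ ≤ ∫ ω, c * Real.exp c * ξ ω ^ 2 ∂μ :=
            integral_mono habs_int (hint2.const_mul _) key
        _ = c * Real.exp c * ∫ ω, ξ ω ^ 2 ∂μ := integral_const_mul _ _
    have hI2_nonneg : 0 ≤ ∫ ω, ξ ω ^ 2 ∂μ := integral_nonneg fun ω => sq_nonneg _
    rw [abs_div, abs_of_pos hEpos, div_le_iff₀ hEpos]
    calc |∫ ω, ξ ω * Real.exp (c * if ξ ω ≤ 1 then ξ ω else 0) ∂μ|
        ≤ c * Real.exp c * ∫ ω, ξ ω ^ 2 ∂μ := hmain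
      _ = c * Real.exp (2 * c) * (∫ ω, ξ ω ^ 2 ∂μ) * Real.exp (-c) := by
          rw [← hprod]; ring
      _ ≤ c * Real.exp (2 * c) * (∫ ω, ξ ω ^ 2 ∂μ)
            * ∫ ω, Real.exp (c * if ξ ω ≤ 1 then ξ ω else 0) ∂μ :=
          mul_le_mul_of_nonneg_left hE
            (mul_nonneg (by positivity) hI2_nonneg)
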